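/- Let μ be a nonnegative Borel measure on ℂ, finite on compacts, satisfying μ(B(0, R+1)) − μ(B(0, R)) = o(R) as R → ∞. Fix z ∈ ℂ. If the limit L = lim_{R→∞} ∫_{|w|<R} (log⁺|z − w| − log⁺|w|) dμ(w) exists and is finite, then L = ∫₁^∞ (μ(B(0,t)) − μ(B(z,t)))/t dt. -/

import Mathlib

open Real Filter MeasureTheory Asymptotics


-- monotonicity of log⁺
lemma aux_logplus_mono {s s' : ℝ} (h0 : 0 ≤ s) (h : s ≤ s') :
    max (Real.log s) 0 ≤ max (Real.log s') 0 := by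
  rcases le_or_gt s 1 with hs | hs
  · rw [max_eq_right (Real.log_nonpos h0 hs)]
    exact le_max_right _ _
  · exact max_le_max (Real.log_le_log (by linarith) h) le_rfl

-- the weight function integral
lemma aux_g_eval {s : ℝ} (hs : 0 ≤ s) :
    ∫ t in (0:ℝ)..s, (Set.Ioi (1:ℝ)).indicator (fun t => t⁻¹) t = max (Real.log s) 0 := by
  rw [intervalIntegral.integral_of_le hs, setIntegral_indicator measurableSet_Ioi]
  rcases le_or_gt s 1 with h | h
  · have : Set.Ioc 0 s ∩ Set.Ioi 1 = ∅ := by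
      ext t
      simp only [Set.mem_inter_iff, Set.mem_Ioc, Set.mem_Ioi, Set.mem_empty_iff_false, iff_false]
      rintro ⟨⟨_, h2⟩, h3⟩; linarith
    rw [this]
    simp only [Measure.restrict_empty, integral_zero_measure]
    exact (max_eq_right (Real.log_nonpos hs h)).symm
  · have he : Set.Ioc 0 s ∩ Set.Ioi 1 = Set.Ioc 1 s := by
      ext t
      simp only [Set.mem_inter_iff, Set.mem_Ioc, Set.mem_Ioi]
      constructor
      · rintro ⟨⟨_, h2⟩, h3⟩; exact ⟨h3, h2⟩
      · rintro ⟨h1, h2⟩; exact ⟨⟨by linarith, h2⟩, h1⟩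
    have h0 : (0:ℝ) ∉ Set.uIcc 1 s := by
      rw [Set.uIcc_of_le h.le]
      rintro ⟨h0, _⟩; linarith
    rw [he, ← intervalIntegral.integral_of_le h.le, integral_inv h0, div_one]
    exact (max_eq_left (Real.log_nonneg h.le)).symm

-- generic integrability helper
lemma aux_intOn {f : ℝ → ℝ} {a : ℝ} (hf : AEStronglyMeasurable f (volume.restrict (Set.Ioi a)))
    (C T : ℝ) (hb : ∀ t ∈ Set.Ioi a, |f t| ≤ C) (hz : ∀ t ∈ Set.Ioi a, T ≤ t → f t = 0) :
    IntegrableOn f (Set.Ioi a) := by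
  refine Integrable.mono' (g := (Set.Ioc a T).indicator fun _ => C) ?_ hf ?_
  · rw [integrable_indicator_iff measurableSet_Ioc]
    refine integrableOn_const (lt_top_iff_ne_top.mp ?_)
    rw [Measure.restrict_apply measurableSet_Ioc]
    exact (measure_mono Set.inter_subset_left).trans_lt measure_Ioc_lt_top
  · rw [ae_restrict_iff' measurableSet_Ioi]
    refine Filter.Eventually.of_forall fun t ht => ?_
    by_cases h : t ≤ T
    · rw [Set.indicator_of_mem (Set.mem_Ioc.mpr ⟨ht, h⟩)]
      rw [Real.norm_eq_abs]
      exact hb t ht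
    · rw [Set.indicator_of_notMem (fun hmem => h hmem.2), hz t ht (not_le.mp h).le]
      simp

lemma aux_meas_mono (μ : Measure ℂ) (c : ℂ) (D : Set ℂ) :
    Measurable fun t : ℝ => (μ (Metric.closedBall c t ∩ D)).toReal := by
  apply Measurable.ennreal_toReal
  apply Monotone.measurable
  intro s t hst
  exact measure_mono (Set.inter_subset_inter_left _ (Metric.closedBall_subset_closedBall hst))

lemma aux_meas_anti (ν : Measure ℂ) (c : ℂ) :
    Measurable fun t : ℝ => (ν {w : ℂ | t < ‖c - w‖}).toReal := by
  apply Measurable.ennreal_toReal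
  apply Antitone.measurable
  intro s t hst
  exact measure_mono (fun w hw => lt_of_le_of_lt hst hw)

-- layer cake
lemma aux_layer (ν : Measure ℂ) [IsFiniteMeasure ν] (c : ℂ) :
    ∫ w, max (Real.log (‖c - w‖)) 0 ∂ν
      = ∫ t in Set.Ioi (1:ℝ), (ν {w : ℂ | t < ‖c - w‖}).toReal / t := by
  set g : ℝ → ℝ := (Set.Ioi (1:ℝ)).indicator fun t => t⁻¹ with hg
  have g_mble : Measurable g := measurable_inv.indicator measurableSet_Ioi
  have g_nn : ∀ t, 0 ≤ g t := fun t =>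
    Set.indicator_nonneg (fun s hs => inv_nonneg.2 (by exact le_trans zero_le_one hs.le)) t
  have f_mble : Measurable fun w : ℂ => ‖c - w‖ :=
    (continuous_norm.comp (continuous_const.sub continuous_id)).measurable
  have g_int : ∀ t > (0:ℝ), IntervalIntegrable g volume 0 t := by
    intro t ht
    rw [intervalIntegrable_iff_integrableOn_Ioc_of_le ht.le]
    refine Integrable.mono' (g := fun _ => (1:ℝ))
      (integrableOn_const measure_Ioc_lt_top.ne) g_mble.aestronglyMeasurable ?_
    refine Filter.Eventually.of_forall fun s => ?_
    rw [Real.norm_eq_abs, abs_of_nonneg (g_nn s)]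
    by_cases hs : s ∈ Set.Ioi (1:ℝ)
    · rw [hg]; rw [Set.indicator_of_mem hs]
      exact inv_le_one_of_one_le₀ hs.le
    · rw [hg]; rw [Set.indicator_of_notMem hs]; exact zero_le_one
  have key := lintegral_comp_eq_lintegral_meas_lt_mul ν
    (f := fun w : ℂ => ‖c - w‖)
    (Filter.Eventually.of_forall fun w => norm_nonneg _)
    f_mble.aemeasurable g_int
    (Filter.Eventually.of_forall fun t => g_nn t)
  -- LHS of key
  have lhs_eq : ∫⁻ w, ENNReal.ofReal (∫ s in (0:ℝ)..(‖c - w‖), g s) ∂ν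
      = ∫⁻ w, ENNReal.ofReal (max (Real.log (‖c - w‖)) 0) ∂ν := by
    apply lintegral_congr_ae
    refine Filter.Eventually.of_forall fun w => ?_
    exact congrArg ENNReal.ofReal (aux_g_eval (norm_nonneg _))
  -- RHS of key
  have rhs_eq : ∫⁻ t in Set.Ioi (0:ℝ), ν {w : ℂ | t < ‖c - w‖} * ENNReal.ofReal (g t)
      = ∫⁻ t in Set.Ioi (1:ℝ), ν {w : ℂ | t < ‖c - w‖} * ENNReal.ofReal t⁻¹ := by
    rw [← Set.Ioc_union_Ioi_eq_Ioi (zero_le_one (α := ℝ)),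
      lintegral_union measurableSet_Ioi Set.Ioc_disjoint_Ioi_same]
    have h1 : ∫⁻ t in Set.Ioc (0:ℝ) 1, ν {w : ℂ | t < ‖c - w‖} * ENNReal.ofReal (g t)
        = 0 := by
      rw [← lintegral_zero (μ := volume.restrict (Set.Ioc (0:ℝ) 1))]
      apply setLIntegral_congr_fun measurableSet_Ioc
      intro t ht
      dsimp only
      rw [hg]
      rw [Set.indicator_of_notMem (by simp only [Set.mem_Ioi, not_lt]; exact ht.2)]
      simp
    have h2 : ∫⁻ t in Set.Ioi (1:ℝ), ν {w : ℂ | t < ‖c - w‖} * ENNReal.ofReal (g t)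
        = ∫⁻ t in Set.Ioi (1:ℝ), ν {w : ℂ | t < ‖c - w‖} * ENNReal.ofReal t⁻¹ := by
      apply setLIntegral_congr_fun measurableSet_Ioi
      intro t ht
      dsimp only
      rw [hg]; rw [Set.indicator_of_mem ht]
    rw [h1, h2, zero_add]
  rw [lhs_eq, rhs_eq] at key
  -- now convert both sides to real integrals
  have lhs_real := integral_eq_lintegral_of_nonneg_ae (μ := ν)
    (f := fun w : ℂ => max (Real.log (‖c - w‖)) 0)
    (Filter.Eventually.of_forall fun w => le_max_right _ _)
    ((Real.measurable_log.comp f_mble).max measurable_const).aestronglyMeasurable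
  have rhs_meas : Measurable fun t : ℝ => (ν {w : ℂ | t < ‖c - w‖}).toReal / t :=
    (aux_meas_anti ν c).div measurable_id
  have rhs_real := integral_eq_lintegral_of_nonneg_ae
    (μ := volume.restrict (Set.Ioi (1:ℝ)))
    (f := fun t : ℝ => (ν {w : ℂ | t < ‖c - w‖}).toReal / t)
    ?_ rhs_meas.aestronglyMeasurable
  · rw [lhs_real, rhs_real]
    congr 1
    rw [key]
    apply setLIntegral_congr_fun measurableSet_Ioi
    intro t ht
    have ht0 : (0:ℝ) < t := lt_trans zero_lt_one ht
    show _ = ENNReal.ofReal ((ν {w : ℂ | t < ‖c - w‖}).toReal / t)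
    rw [div_eq_mul_inv, ENNReal.ofReal_mul ENNReal.toReal_nonneg,
      ENNReal.ofReal_toReal (measure_ne_top ν _)]
  · filter_upwards [ae_restrict_mem measurableSet_Ioi] with t ht
    exact div_nonneg ENNReal.toReal_nonneg (le_trans zero_le_one (le_of_lt ht))


-- integrability of the truncated difference integrand
lemma aux_tr_int (μ : Measure ℂ) [IsFiniteMeasureOnCompacts μ] (z : ℂ) (ρ : ℝ) :
    IntegrableOn (fun t =>
        ((μ (Metric.closedBall 0 t ∩ Metric.ball 0 ρ)).toReal
          - (μ (Metric.closedBall z t ∩ Metric.ball 0 ρ)).toReal) / t) (Set.Ioi 1) volume := by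
  have hfin : μ (Metric.ball (0:ℂ) ρ) ≠ ⊤ :=
    ((measure_mono Metric.ball_subset_closedBall).trans_lt (measure_closedBall_lt_top)).ne
  have hmeas : Measurable fun t : ℝ =>
      ((μ (Metric.closedBall 0 t ∩ Metric.ball 0 ρ)).toReal
        - (μ (Metric.closedBall z t ∩ Metric.ball 0 ρ)).toReal) / t :=
    ((aux_meas_mono μ 0 _).sub (aux_meas_mono μ z _)).div measurable_id
  have hle : ∀ (c : ℂ) (t : ℝ),
      (μ (Metric.closedBall c t ∩ Metric.ball 0 ρ)).toReal ≤ (μ (Metric.ball (0:ℂ) ρ)).toReal :=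
    fun c t => ENNReal.toReal_mono hfin (measure_mono Set.inter_subset_right)
  refine aux_intOn hmeas.aestronglyMeasurable ((μ (Metric.ball (0:ℂ) ρ)).toReal)
    (|ρ| + ‖z‖) (fun t ht => ?_) (fun t ht hT => ?_)
  · have ht1 : (1:ℝ) < t := ht
    rw [abs_div, abs_of_pos (lt_trans zero_lt_one ht1)]
    have h1 : |(μ (Metric.closedBall 0 t ∩ Metric.ball 0 ρ)).toReal
        - (μ (Metric.closedBall z t ∩ Metric.ball 0 ρ)).toReal|
        ≤ (μ (Metric.ball (0:ℂ) ρ)).toReal := by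
      rw [abs_sub_le_iff]
      constructor
      · have := hle 0 t; have := ENNReal.toReal_nonneg
          (a := μ (Metric.closedBall z t ∩ Metric.ball 0 ρ)); linarith [hle 0 t,
          ENNReal.toReal_nonneg (a := μ (Metric.closedBall z t ∩ Metric.ball 0 ρ))]
      · linarith [hle z t,
          ENNReal.toReal_nonneg (a := μ (Metric.closedBall 0 t ∩ Metric.ball 0 ρ))]
    exact le_trans (div_le_self (abs_nonneg _) (le_of_lt ht1)) h1
  · have hsub : ∀ c : ℂ, ‖c‖ ≤ t - |ρ| →
        Metric.ball (0:ℂ) ρ ⊆ Metric.closedBall c t := by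
      intro c hc w hw
      rw [Metric.mem_ball, Complex.dist_eq, sub_zero] at hw
      rw [Metric.mem_closedBall, Complex.dist_eq]
      calc ‖w - c‖ ≤ ‖w‖ + ‖c‖ := by
            simpa [sub_eq_add_neg] using norm_add_le w (-c)
        _ ≤ |ρ| + (t - |ρ|) := by
            have h1 : ‖w‖ ≤ |ρ| := le_trans hw.le (le_abs_self ρ)
            exact add_le_add h1 hc
        _ = t := by ring
    have hz0 : (0:ℝ) ≤ t - |ρ| := by
      have := norm_nonneg z; linarith
    have h0 : Metric.ball (0:ℂ) ρ ⊆ Metric.closedBall 0 t := hsub 0 (by simpa using hz0)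
    have hz' : Metric.ball (0:ℂ) ρ ⊆ Metric.closedBall z t := hsub z (by linarith)
    rw [Set.inter_eq_right.mpr h0, Set.inter_eq_right.mpr hz', sub_self, zero_div]

-- key identity
lemma aux_key (μ : Measure ℂ) [IsFiniteMeasureOnCompacts μ] (z : ℂ) (R : ℝ) :
    ∫ w in Metric.ball (0:ℂ) R,
        (max (Real.log (‖z - w‖)) 0 - max (Real.log (‖w‖)) 0) ∂μ
      = ∫ t in Set.Ioi (1:ℝ),
          ((μ (Metric.closedBall 0 t ∩ Metric.ball 0 R)).toReal
            - (μ (Metric.closedBall z t ∩ Metric.ball 0 R)).toReal) / t := by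
  set D := Metric.ball (0:ℂ) R with hD
  have hDfin : μ D ≠ ⊤ :=
    ((measure_mono Metric.ball_subset_closedBall).trans_lt (measure_closedBall_lt_top)).ne
  haveI : IsFiniteMeasure (μ.restrict D) :=
    ⟨by rwa [Measure.restrict_apply_univ, lt_top_iff_ne_top]⟩
  have fm : ∀ c : ℂ, Measurable fun w : ℂ => ‖c - w‖ := fun c =>
    (continuous_norm.comp (continuous_const.sub continuous_id)).measurable
  have hSm : ∀ (c : ℂ) (t : ℝ), MeasurableSet {w : ℂ | t < ‖c - w‖} := fun c t =>
    measurableSet_lt measurable_const (fm c)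
  have habs : ∀ (c w : ℂ), ‖c - w‖ ≤ ‖c‖ + ‖w‖ := by
    intro c w
    exact norm_sub_le c w
  have hint : ∀ c : ℂ,
      Integrable (fun w => max (Real.log (‖c - w‖)) 0) (μ.restrict D) := by
    intro c
    have hm : Measurable fun w : ℂ => max (Real.log (‖c - w‖)) 0 :=
      (Real.measurable_log.comp (fm c)).max measurable_const
    refine Integrable.mono' (integrable_const (max (Real.log (‖c‖ + |R|)) 0))
      hm.aestronglyMeasurable ?_
    filter_upwards [ae_restrict_mem measurableSet_ball] with w hw
    rw [Real.norm_eq_abs, abs_of_nonneg (le_max_right _ _)]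
    apply aux_logplus_mono (norm_nonneg _)
    have hw' : ‖w‖ < R := by rwa [Metric.mem_ball, Complex.dist_eq, sub_zero] at hw
    have := habs c w
    have := lt_of_lt_of_le hw' (le_abs_self R)
    linarith
  have e0 : (∫ w in D, (max (Real.log (‖z - w‖)) 0
        - max (Real.log (‖w‖)) 0) ∂μ)
      = ∫ w in D, (max (Real.log (‖z - w‖)) 0
        - max (Real.log (‖(0:ℂ) - w‖)) 0) ∂μ := by
    apply integral_congr_ae
    refine Filter.Eventually.of_forall fun w => ?_
    simp only [zero_sub, norm_neg]
  rw [e0, integral_sub (hint z) (hint 0), aux_layer (μ.restrict D) z, aux_layer (μ.restrict D) 0]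
  have hgint : ∀ c : ℂ, IntegrableOn
      (fun t => ((μ.restrict D) {w : ℂ | t < ‖c - w‖}).toReal / t)
      (Set.Ioi 1) volume := by
    intro c
    refine aux_intOn ((aux_meas_anti _ c).div measurable_id).aestronglyMeasurable
      ((μ D).toReal) (‖c‖ + |R|) (fun t ht => ?_) (fun t ht hT => ?_)
    · have ht1 : (1:ℝ) < t := ht
      rw [abs_div, abs_of_pos (lt_trans zero_lt_one ht1), abs_of_nonneg ENNReal.toReal_nonneg]
      refine le_trans (div_le_self ENNReal.toReal_nonneg ht1.le) ?_
      rw [Measure.restrict_apply (hSm c t)]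
      exact ENNReal.toReal_mono hDfin (measure_mono Set.inter_subset_right)
    · rw [Measure.restrict_apply (hSm c t)]
      have he : {w : ℂ | t < ‖c - w‖} ∩ D = ∅ := by
        ext w
        simp only [Set.mem_inter_iff, Set.mem_setOf_eq, Set.mem_empty_iff_false, iff_false,
          not_and]
        intro h1 h2
        have hw' : ‖w‖ < R := by rwa [Metric.mem_ball, Complex.dist_eq, sub_zero] at h2
        have := habs c w
        have := lt_of_lt_of_le hw' (le_abs_self R)
        linarith
      rw [he, measure_empty]
      simp
  rw [← integral_sub (hgint z) (hgint 0)]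
  apply setIntegral_congr_fun measurableSet_Ioi
  intro t ht
  have hrw : ∀ c : ℂ, (μ.restrict D) {w : ℂ | t < ‖c - w‖}
      = μ D - μ (Metric.closedBall c t ∩ D) := by
    intro c
    rw [Measure.restrict_apply (hSm c t)]
    have hset : {w : ℂ | t < ‖c - w‖} ∩ D = D \ (Metric.closedBall c t ∩ D) := by
      ext w
      simp only [Set.mem_inter_iff, Set.mem_setOf_eq, Set.mem_diff, Metric.mem_closedBall,
        Complex.dist_eq, not_and, not_le]
      constructor
      · rintro ⟨h1, h2⟩
        refine ⟨h2, fun h3 _ => ?_⟩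
        rw [norm_sub_rev] at h1
        exact absurd h3 (not_le.mpr h1)
      · rintro ⟨h1, h2⟩
        refine ⟨?_, h1⟩
        by_contra hcon
        have hc2 := not_lt.mp hcon
        rw [norm_sub_rev] at hc2
        exact h2 hc2 h1
    rw [hset, measure_diff Set.inter_subset_right
      ((measurableSet_closedBall.inter measurableSet_ball).nullMeasurableSet)
      (((measure_mono Set.inter_subset_right).trans_lt (lt_top_iff_ne_top.mpr hDfin)).ne)]
  have hle : ∀ c : ℂ, μ (Metric.closedBall c t ∩ D) ≤ μ D :=
    fun c => measure_mono Set.inter_subset_right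
  show ((μ.restrict D) {w : ℂ | t < ‖z - w‖}).toReal / t
      - ((μ.restrict D) {w : ℂ | t < ‖(0:ℂ) - w‖}).toReal / t = _
  rw [hrw z, hrw 0, ENNReal.toReal_sub_of_le (hle z) hDfin,
    ENNReal.toReal_sub_of_le (hle 0) hDfin]
  ring


lemma aux_abs_sub (c w : ℂ) : ‖c - w‖ ≤ ‖c‖ + ‖w‖ := by
  exact norm_sub_le c w

lemma aux_bound (μ : Measure ℂ) [IsFiniteMeasureOnCompacts μ] (z : ℂ) (R : ℝ) (hR1 : 1 ≤ R) :
    ‖(∫ t in Set.Ioc (1:ℝ) R,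
        ((μ (Metric.closedBall 0 t)).toReal - (μ (Metric.closedBall z t)).toReal) / t)
      - ∫ t in Set.Ioi (1:ℝ),
          ((μ (Metric.closedBall 0 t ∩ Metric.ball 0 (R + (‖z‖ + 1)))).toReal
            - (μ (Metric.closedBall z t ∩ Metric.ball 0 (R + (‖z‖ + 1)))).toReal) / t‖
      ≤ (2 * ‖z‖ + 1) *
        (((μ (Metric.closedBall (0:ℂ) (R + (‖z‖ + 1)))).toReal
          - (μ (Metric.closedBall (0:ℂ) (R - (‖z‖ + 1)))).toReal) / R) := by
  have hr0 : 0 ≤ ‖z‖ := norm_nonneg _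
  have hR0 : (0:ℝ) < R := lt_of_lt_of_le zero_lt_one hR1
  set r := ‖z‖ with hr
  set R' := R + (r + 1) with hR'
  set T := R + (2*r + 1) with hT
  set D := Metric.ball (0:ℂ) R' with hDdef
  have hDfin : μ D ≠ ⊤ :=
    ((measure_mono Metric.ball_subset_closedBall).trans_lt (measure_closedBall_lt_top)).ne
  set f : ℝ → ℝ := fun t => ((μ (Metric.closedBall 0 t ∩ D)).toReal
    - (μ (Metric.closedBall z t ∩ D)).toReal) / t with hf
  have hint : IntegrableOn f (Set.Ioi 1) volume := aux_tr_int μ z R'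
  have hsplit : ∫ t in Set.Ioi (1:ℝ), f t
      = (∫ t in Set.Ioc (1:ℝ) R, f t) + ∫ t in Set.Ioi R, f t := by
    rw [← Set.Ioc_union_Ioi_eq_Ioi hR1]
    exact setIntegral_union Set.Ioc_disjoint_Ioi_same measurableSet_Ioi
      (hint.mono_set Set.Ioc_subset_Ioi_self) (hint.mono_set (Set.Ioi_subset_Ioi hR1))
  have hcong : ∫ t in Set.Ioc (1:ℝ) R,
      ((μ (Metric.closedBall 0 t)).toReal - (μ (Metric.closedBall z t)).toReal) / t
      = ∫ t in Set.Ioc (1:ℝ) R, f t := by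
    apply setIntegral_congr_fun measurableSet_Ioc
    intro t ht
    have h0sub : Metric.closedBall (0:ℂ) t ⊆ D :=
      Metric.closedBall_subset_ball (lt_of_le_of_lt ht.2 (by rw [hR']; linarith))
    have hzsub : Metric.closedBall z t ⊆ D := by
      intro w hw
      rw [Metric.mem_closedBall, Complex.dist_eq] at hw
      rw [hDdef, Metric.mem_ball, Complex.dist_eq, sub_zero]
      have h1 : ‖w‖ ≤ ‖w - z‖ + ‖z‖ := by
        have := aux_abs_sub (w - z) (-z)
        simp only [sub_neg_eq_add, sub_add_cancel, norm_neg] at this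
        exact this
      rw [hR']
      have ht2 := ht.2
      rw [hr] at *
      linarith
    show ((μ (Metric.closedBall 0 t)).toReal - (μ (Metric.closedBall z t)).toReal) / t
      = ((μ (Metric.closedBall 0 t ∩ D)).toReal - (μ (Metric.closedBall z t ∩ D)).toReal) / t
    rw [Set.inter_eq_left.mpr h0sub, Set.inter_eq_left.mpr hzsub]
  rw [hcong, hsplit]
  have hre : (∫ t in Set.Ioc (1:ℝ) R, f t)
      - ((∫ t in Set.Ioc (1:ℝ) R, f t) + ∫ t in Set.Ioi R, f t)
      = -(∫ t in Set.Ioi R, f t) := by ring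
  rw [hre, norm_neg]
  set C := ((μ (Metric.closedBall (0:ℂ) R')).toReal
    - (μ (Metric.closedBall (0:ℂ) (R - (r+1)))).toReal) / R with hC
  have hCfin : (μ (Metric.closedBall (0:ℂ) R')) ≠ ⊤ := (measure_closedBall_lt_top).ne
  have hC0 : 0 ≤ C := by
    apply div_nonneg _ hR0.le
    rw [sub_nonneg]
    exact ENNReal.toReal_mono hCfin
      (measure_mono (Metric.closedBall_subset_closedBall (by rw [hR']; linarith)))
  refine le_trans (norm_integral_le_of_norm_le
    (g := (Set.Ioc R T).indicator fun _ => C) ?_ ?_) ?_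
  · rw [integrable_indicator_iff measurableSet_Ioc]
    refine integrableOn_const (lt_top_iff_ne_top.mp ?_)
    rw [Measure.restrict_apply measurableSet_Ioc]
    exact (measure_mono Set.inter_subset_left).trans_lt measure_Ioc_lt_top
  · filter_upwards [ae_restrict_mem measurableSet_Ioi] with t ht
    have htR : R < t := ht
    by_cases hle : t ≤ T
    · rw [Set.indicator_of_mem (Set.mem_Ioc.mpr ⟨htR, hle⟩)]
      have ht0 : (0:ℝ) < t := lt_trans hR0 htR
      have hfin2 : ∀ c : ℂ, μ (Metric.closedBall c t ∩ D) ≠ ⊤ := fun c =>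
        ((measure_mono Set.inter_subset_right).trans_lt (lt_top_iff_ne_top.mpr hDfin)).ne
      have hlow : ∀ c : ℂ, ‖c‖ ≤ r →
          (μ (Metric.closedBall (0:ℂ) (R - (r+1)))).toReal
            ≤ (μ (Metric.closedBall c t ∩ D)).toReal := by
        intro c hc
        apply ENNReal.toReal_mono (hfin2 c)
        apply measure_mono
        intro w hw
        rw [Metric.mem_closedBall, Complex.dist_eq, sub_zero] at hw
        constructor
        · rw [Metric.mem_closedBall, Complex.dist_eq]
          calc ‖w - c‖ ≤ ‖w‖ + ‖c‖ := aux_abs_sub w c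
            _ ≤ (R - (r+1)) + r := add_le_add hw hc
            _ ≤ t := by linarith
        · rw [hDdef, Metric.mem_ball, Complex.dist_eq, sub_zero]
          rw [hR']
          linarith
      have hup : ∀ c : ℂ, (μ (Metric.closedBall c t ∩ D)).toReal
          ≤ (μ (Metric.closedBall (0:ℂ) R')).toReal := fun c =>
        ENNReal.toReal_mono hCfin (measure_mono
          (Set.inter_subset_right.trans Metric.ball_subset_closedBall))
      rw [Real.norm_eq_abs]
      show |((μ (Metric.closedBall 0 t ∩ D)).toReal
        - (μ (Metric.closedBall z t ∩ D)).toReal) / t| ≤ C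
      rw [abs_div, abs_of_pos ht0, hC]
      have hba : 0 ≤ (μ (Metric.closedBall (0:ℂ) R')).toReal
          - (μ (Metric.closedBall (0:ℂ) (R - (r+1)))).toReal := by
        rw [sub_nonneg]
        exact ENNReal.toReal_mono hCfin
          (measure_mono (Metric.closedBall_subset_closedBall (by rw [hR']; linarith)))
      apply div_le_div₀ hba ?_ hR0 htR.le
      · rw [abs_sub_le_iff]
        constructor
        · linarith [hup 0, hlow z (le_of_eq hr.symm)]
        · linarith [hup z, hlow 0 (by simpa using hr0)]
    · rw [Set.indicator_of_notMem (fun hmem => hle hmem.2)]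
      have hTt : T < t := not_le.mp hle
      have h0 : D ⊆ Metric.closedBall (0:ℂ) t := by
        intro w hw
        rw [hDdef, Metric.mem_ball, Complex.dist_eq, sub_zero] at hw
        rw [Metric.mem_closedBall, Complex.dist_eq, sub_zero]
        rw [hR'] at hw
        rw [hT] at hTt
        linarith
      have hz2 : D ⊆ Metric.closedBall z t := by
        intro w hw
        rw [hDdef, Metric.mem_ball, Complex.dist_eq, sub_zero] at hw
        rw [Metric.mem_closedBall, Complex.dist_eq]
        have h1 : ‖w - z‖ ≤ ‖w‖ + ‖z‖ := aux_abs_sub w z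
        rw [hR'] at hw
        rw [hT] at hTt
        rw [← hr] at h1
        linarith
      show ‖((μ (Metric.closedBall 0 t ∩ D)).toReal
        - (μ (Metric.closedBall z t ∩ D)).toReal) / t‖ ≤ 0
      rw [Set.inter_eq_right.mpr h0, Set.inter_eq_right.mpr hz2, sub_self, zero_div, norm_zero]
  · rw [setIntegral_indicator measurableSet_Ioc,
      Set.inter_eq_self_of_subset_right Set.Ioc_subset_Ioi_self, setIntegral_const,
      Real.volume_real_Ioc_of_le (by rw [hT]; linarith), smul_eq_mul]
    have hTR : T - R = 2*r + 1 := by rw [hT]; ring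
    rw [hTR]


lemma aux_phi (μ : Measure ℂ) [IsFiniteMeasureOnCompacts μ]
    (ho : (fun R : ℝ => (μ (Metric.closedBall 0 (R + 1))).toReal
        - (μ (Metric.closedBall 0 R)).toReal) =o[atTop] (fun R : ℝ => R)) (c : ℝ) :
    Tendsto (fun R : ℝ => ((μ (Metric.closedBall (0:ℂ) (R + c + 1))).toReal
        - (μ (Metric.closedBall (0:ℂ) (R + c))).toReal) / R) atTop (nhds 0) := by
  have hshift : Tendsto (fun R : ℝ => R + c) atTop atTop :=
    tendsto_atTop_add_const_right atTop c tendsto_id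
  have h1 := ho.comp_tendsto hshift
  have h2 : ((fun R : ℝ => R) ∘ fun R : ℝ => R + c) =O[atTop] fun R : ℝ => R := by
    rw [Asymptotics.isBigO_iff]
    refine ⟨2, ?_⟩
    filter_upwards [eventually_ge_atTop (|c|), eventually_ge_atTop (0:ℝ)] with R hR hR0
    simp only [Function.comp_apply, Real.norm_eq_abs]
    calc |R + c| ≤ |R| + |c| := abs_add_le _ _
      _ ≤ |R| + |R| := by rw [abs_of_nonneg hR0]; exact add_le_add le_rfl hR
      _ = 2 * |R| := by ring
  have h3 := (h1.trans_isBigO h2).tendsto_div_nhds_zero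
  refine Filter.Tendsto.congr (fun R => ?_) h3
  simp only [Function.comp_apply]


/-- If `μ` is finite on compacts, `μ(B(0,R+1)) - μ(B(0,R)) = o(R)`, and the limit
`L = lim_{R→∞} ∫_{|w|<R} (log⁺|z-w| - log⁺|w|) dμ(w)` exists, then
`L = ∫₁^∞ (μ(B(0,t)) - μ(B(z,t)))/t dt` (as an improper integral). -/
theorem stmt7 (μ : Measure ℂ) [IsFiniteMeasureOnCompacts μ] (z : ℂ) (L : ℝ)
    (ho : (fun R : ℝ => (μ (Metric.closedBall 0 (R + 1))).toReal
        - (μ (Metric.closedBall 0 R)).toReal) =o[atTop] (fun R : ℝ => R))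
    (hlim : Tendsto (fun R : ℝ => ∫ w in {w : ℂ | ‖w‖ < R},
        (max (Real.log (‖z - w‖)) 0 - max (Real.log (‖w‖)) 0) ∂μ)
      atTop (nhds L)) :
    Tendsto (fun R : ℝ => ∫ t in Set.Ioc (1:ℝ) R,
        ((μ (Metric.closedBall 0 t)).toReal - (μ (Metric.closedBall z t)).toReal) / t)
      atTop (nhds L) := by
  have hr0 : 0 ≤ ‖z‖ := norm_nonneg _
  have hset : ∀ R : ℝ, {w : ℂ | ‖w‖ < R} = Metric.ball (0:ℂ) R := by
    intro R; ext w
    simp [Metric.mem_ball, Complex.dist_eq, sub_zero]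
  simp_rw [hset] at hlim
  have hshift : Tendsto (fun R : ℝ => R + (‖z‖ + 1)) atTop atTop :=
    tendsto_atTop_add_const_right atTop (‖z‖ + 1) tendsto_id
  have hF' : Tendsto (fun R : ℝ => ∫ t in Set.Ioi (1:ℝ),
      ((μ (Metric.closedBall 0 t ∩ Metric.ball 0 (R + (‖z‖ + 1)))).toReal
        - (μ (Metric.closedBall z t ∩ Metric.ball 0 (R + (‖z‖ + 1)))).toReal) / t)
      atTop (nhds L) := by
    have h := hlim.comp hshift
    refine Filter.Tendsto.congr (fun R => ?_) h
    exact aux_key μ z (R + (‖z‖ + 1))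
  -- limit of the additive-shell error term
  have hψ : Tendsto (fun R : ℝ =>
      ((μ (Metric.closedBall (0:ℂ) (R + (‖z‖ + 1)))).toReal
        - (μ (Metric.closedBall (0:ℂ) (R - (‖z‖ + 1)))).toReal) / R)
      atTop (nhds 0) := by
    set m := ⌈2 * ‖z‖ + 2⌉₊ with hm
    have hm2 : 2 * ‖z‖ + 2 ≤ (m:ℝ) := Nat.le_ceil _
    have hupper : Tendsto (fun R : ℝ => ∑ k ∈ Finset.range m,
        ((μ (Metric.closedBall (0:ℂ) (R + ((k:ℝ) - (‖z‖ + 1)) + 1))).toReal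
          - (μ (Metric.closedBall (0:ℂ) (R + ((k:ℝ) - (‖z‖ + 1))))).toReal) / R)
        atTop (nhds 0) := by
      have h := tendsto_finset_sum (Finset.range m)
        (fun k (_ : k ∈ Finset.range m) => aux_phi μ ho ((k:ℝ) - (‖z‖ + 1)))
      simpa using h
    apply squeeze_zero' ?_ ?_ hupper
    · filter_upwards [eventually_ge_atTop (1:ℝ)] with R hR
      apply div_nonneg _ (by linarith)
      rw [sub_nonneg]
      exact ENNReal.toReal_mono (measure_closedBall_lt_top).ne
        (measure_mono (Metric.closedBall_subset_closedBall (by linarith)))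
    · filter_upwards [eventually_ge_atTop (1:ℝ)] with R hR
      rw [← Finset.sum_div]
      apply div_le_div_of_nonneg_right ?_ (show (0:ℝ) ≤ R by linarith)
      have htele : ∑ k ∈ Finset.range m,
          ((μ (Metric.closedBall (0:ℂ) (R + ((k:ℝ) - (‖z‖ + 1)) + 1))).toReal
            - (μ (Metric.closedBall (0:ℂ) (R + ((k:ℝ) - (‖z‖ + 1))))).toReal)
          = (μ (Metric.closedBall (0:ℂ) (R + ((m:ℝ) - (‖z‖ + 1))))).toReal
            - (μ (Metric.closedBall (0:ℂ) (R + (((0:ℕ):ℝ) - (‖z‖ + 1))))).toReal := by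
        rw [← Finset.sum_range_sub (f := fun k : ℕ =>
          (μ (Metric.closedBall (0:ℂ) (R + ((k:ℝ) - (‖z‖ + 1))))).toReal) m]
        apply Finset.sum_congr rfl
        intro k _
        rw [show R + ((k:ℝ) - (‖z‖ + 1)) + 1
          = R + (((k+1:ℕ):ℝ) - (‖z‖ + 1)) from by push_cast; ring]
      rw [htele]
      have h1 : (μ (Metric.closedBall (0:ℂ) (R + (‖z‖ + 1)))).toReal
          ≤ (μ (Metric.closedBall (0:ℂ) (R + ((m:ℝ) - (‖z‖ + 1))))).toReal :=
        ENNReal.toReal_mono (measure_closedBall_lt_top).ne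
          (measure_mono (Metric.closedBall_subset_closedBall (by linarith)))
      have h2 : (μ (Metric.closedBall (0:ℂ) (R + (((0:ℕ):ℝ) - (‖z‖ + 1))))).toReal
          = (μ (Metric.closedBall (0:ℂ) (R - (‖z‖ + 1)))).toReal := by
        rw [show R + (((0:ℕ):ℝ) - (‖z‖ + 1)) = R - (‖z‖ + 1) from by
          push_cast; ring]
      linarith
  -- squeeze of the error term
  have hbnd : ∀ᶠ R in atTop, ‖(∫ t in Set.Ioc (1:ℝ) R,
        ((μ (Metric.closedBall 0 t)).toReal - (μ (Metric.closedBall z t)).toReal) / t)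
      - ∫ t in Set.Ioi (1:ℝ),
          ((μ (Metric.closedBall 0 t ∩ Metric.ball 0 (R + (‖z‖ + 1)))).toReal
            - (μ (Metric.closedBall z t ∩ Metric.ball 0 (R + (‖z‖ + 1)))).toReal) / t‖
      ≤ (2 * ‖z‖ + 1) *
        (((μ (Metric.closedBall (0:ℂ) (R + (‖z‖ + 1)))).toReal
          - (μ (Metric.closedBall (0:ℂ) (R - (‖z‖ + 1)))).toReal) / R) := by
    filter_upwards [eventually_ge_atTop (1:ℝ)] with R hR
    exact aux_bound μ z R hR
  have hE : Tendsto (fun R : ℝ => (∫ t in Set.Ioc (1:ℝ) R,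
        ((μ (Metric.closedBall 0 t)).toReal - (μ (Metric.closedBall z t)).toReal) / t)
      - ∫ t in Set.Ioi (1:ℝ),
          ((μ (Metric.closedBall 0 t ∩ Metric.ball 0 (R + (‖z‖ + 1)))).toReal
            - (μ (Metric.closedBall z t ∩ Metric.ball 0 (R + (‖z‖ + 1)))).toReal) / t)
      atTop (nhds 0) := by
    apply squeeze_zero_norm' hbnd
    have := hψ.const_mul (2 * ‖z‖ + 1)
    simpa using this
  have hfin := hF'.add hE
  rw [add_zero] at hfin
  exact Filter.Tendsto.congr (fun R => by ring) hfin
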